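/- Let f ∈ C²([a,b]) be convex with m = min f'' > 0 and M = max f'' on [a,b]. Then for x_i ∈ [a,b] and positive weights p_i summing to 1, the Jensen functional ∑ p_i f(x_i) − f(∑ p_i x_i) is at most (M/(m+M))[f(a)+f(b)−2f((a+b)/2)] + (mM/(m+M))(J − (b−a)²/4), where J = ∑ p_i x_i² − (∑ p_i x_i)². -/

import Mathlib

open Set Finset

lemma aux_hasDerivAt_quad (c s : ℝ) : HasDerivAt (fun y : ℝ => c * y ^ 2) (2 * c * s) s := by
  have h := (hasDerivAt_pow 2 s).const_mul c
  exact h.congr_deriv (by norm_num; ring)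

lemma aux_convexOn_of_second_deriv (a b : ℝ) (g g' g'' : ℝ → ℝ)
    (hg' : ∀ t ∈ Set.Icc a b, HasDerivAt g (g' t) t)
    (hg'' : ∀ t ∈ Set.Icc a b, HasDerivAt g' (g'' t) t)
    (h0 : ∀ t ∈ Set.Icc a b, 0 ≤ g'' t) : ConvexOn ℝ (Set.Icc a b) g := by
  have hint : interior (Set.Icc a b) ⊆ Set.Icc a b := interior_subset
  exact convexOn_of_hasDerivWithinAt2_nonneg (convex_Icc a b)
    (fun t ht => ((hg' t ht).continuousAt).continuousWithinAt)
    (fun t ht => ((hg' t (hint ht)).hasDerivWithinAt))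
    (fun t ht => ((hg'' t (hint ht)).hasDerivWithinAt))
    (fun t ht => h0 t (hint ht))

/-- Simic's inequality. -/
lemma aux_simic (n : ℕ) (a b : ℝ) (hab : a < b) (g : ℝ → ℝ)
    (hg : ConvexOn ℝ (Set.Icc a b) g)
    (p x : Fin n → ℝ) (hp : ∀ i, 0 < p i) (hps : ∑ i, p i = 1)
    (hx : ∀ i, x i ∈ Set.Icc a b) :
    ∑ i, p i * g (x i) - g (∑ i, p i * x i) ≤ g a + g b - 2 * g ((a + b) / 2) := by
  have hba : (0:ℝ) < b - a := by linarith
  set t : Fin n → ℝ := fun i => (b - x i) / (b - a) with ht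
  have ht01 : ∀ i, t i ∈ Set.Icc (0:ℝ) 1 := by
    intro i
    obtain ⟨h1, h2⟩ := hx i
    constructor
    · apply div_nonneg <;> linarith
    · rw [div_le_one hba]; linarith
  have hxi : ∀ i, x i = t i * a + (1 - t i) * b := by
    intro i; rw [ht]; field_simp; ring
  set T : ℝ := ∑ i, p i * t i with hT
  have hT0 : 0 ≤ T := Finset.sum_nonneg fun i _ => mul_nonneg (hp i).le (ht01 i).1
  have hT1 : T ≤ 1 := by
    calc T ≤ ∑ i, p i := Finset.sum_le_sum fun i _ => by
            nlinarith [(hp i).le, (ht01 i).2]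
      _ = 1 := hps
  have hxbar : ∑ i, p i * x i = T * a + (1 - T) * b := by
    have e1 : ∑ i, p i * x i = ∑ i, (p i * t i * a + (p i - p i * t i) * b) := by
      apply Finset.sum_congr rfl
      intro i _; rw [hxi i]; ring
    rw [e1, Finset.sum_add_distrib, ← Finset.sum_mul, ← Finset.sum_mul,
      Finset.sum_sub_distrib, hps]
  have haI : a ∈ Set.Icc a b := by constructor <;> linarith
  have hbI : b ∈ Set.Icc a b := by constructor <;> linarith
  have hpt : ∀ i, g (x i) ≤ t i * g a + (1 - t i) * g b := by
    intro i
    have := hg.2 haI hbI (ht01 i).1 (by linarith [(ht01 i).2]) (by ring : t i + (1 - t i) = 1)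
    simpa [smul_eq_mul, ← hxi i] using this
  have hsum : ∑ i, p i * g (x i) ≤ T * g a + (1 - T) * g b := by
    calc ∑ i, p i * g (x i) ≤ ∑ i, p i * (t i * g a + (1 - t i) * g b) :=
          Finset.sum_le_sum fun i _ => mul_le_mul_of_nonneg_left (hpt i) (hp i).le
      _ = ∑ i, (p i * t i * g a + (p i - p i * t i) * g b) := by
          apply Finset.sum_congr rfl; intro i _; ring
      _ = T * g a + (1 - T) * g b := by
          rw [Finset.sum_add_distrib, ← Finset.sum_mul, ← Finset.sum_mul,
            Finset.sum_sub_distrib, hps]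
  have hxbarI : T * a + (1 - T) * b ∈ Set.Icc a b := by constructor <;> nlinarith
  have hreflI : (1 - T) * a + T * b ∈ Set.Icc a b := by constructor <;> nlinarith
  have hcomb := hg.2 hxbarI hreflI (by norm_num : (0:ℝ) ≤ 1/2) (by norm_num : (0:ℝ) ≤ 1/2)
    (by norm_num : (1:ℝ)/2 + 1/2 = 1)
  rw [smul_eq_mul, smul_eq_mul, smul_eq_mul, smul_eq_mul] at hcomb
  have hmid : g ((a + b) / 2) ≤
      (g (T * a + (1 - T) * b) + g ((1 - T) * a + T * b)) / 2 := by
    rw [show (a + b) / 2 = 1/2 * (T * a + (1 - T) * b) + 1/2 * ((1 - T) * a + T * b) by ring]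
    linarith [hcomb]
  have hrefl : g ((1 - T) * a + T * b) ≤ (1 - T) * g a + T * g b := by
    have := hg.2 haI hbI (by linarith : (0:ℝ) ≤ 1 - T) hT0 (by ring : (1 - T) + T = 1)
    simpa [smul_eq_mul] using this
  rw [hxbar]
  linarith

theorem jensen_two_sided_improvement_upper
    (n : ℕ) (a b m M : ℝ) (hab : a < b)
    (f f' f'' : ℝ → ℝ)
    (hf : ConvexOn ℝ (Set.Icc a b) f)
    (hf' : ∀ t ∈ Set.Icc a b, HasDerivAt f (f' t) t)
    (hf'' : ∀ t ∈ Set.Icc a b, HasDerivAt f' (f'' t) t)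
    (hfc : ContinuousOn f'' (Set.Icc a b))
    (hm : ∀ t ∈ Set.Icc a b, m ≤ f'' t) (hm' : ∃ t ∈ Set.Icc a b, f'' t = m)
    (hM : ∀ t ∈ Set.Icc a b, f'' t ≤ M) (hM' : ∃ t ∈ Set.Icc a b, f'' t = M)
    (hmpos : 0 < m)
    (p x : Fin n → ℝ)
    (hp : ∀ i, 0 < p i) (hps : ∑ i, p i = 1)
    (hx : ∀ i, x i ∈ Set.Icc a b) :
    ∑ i, p i * f (x i) - f (∑ i, p i * x i) ≤
      (M / (m + M)) * (f a + f b - 2 * f ((a + b) / 2)) +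
        (m * M / (m + M)) *
          ((∑ i, p i * (x i) ^ 2 - (∑ i, p i * x i) ^ 2) - (b - a) ^ 2 / 4) := by
  have hMpos : 0 < M := by
    obtain ⟨t0, ht0, hft0⟩ := hM'
    have := hm t0 ht0
    linarith
  have hmM : 0 < m + M := by linarith
  have hquadm : ∀ s : ℝ, HasDerivAt (fun y : ℝ => m / 2 * y ^ 2) (m * s) s := by
    intro s
    have h := aux_hasDerivAt_quad (m/2) s
    rwa [show 2 * (m/2) * s = m * s by ring] at h
  have hquadM : ∀ s : ℝ, HasDerivAt (fun y : ℝ => M / 2 * y ^ 2) (M * s) s := by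
    intro s
    have h := aux_hasDerivAt_quad (M/2) s
    rwa [show 2 * (M/2) * s = M * s by ring] at h
  have hlin : ∀ (c s : ℝ), HasDerivAt (fun y : ℝ => c * y) c s := by
    intro c s
    simpa using (hasDerivAt_id s).const_mul c
  have hgconv : ConvexOn ℝ (Set.Icc a b) (fun s => f s - m / 2 * s ^ 2) :=
    aux_convexOn_of_second_deriv a b _ (fun s => f' s - m * s) (fun s => f'' s - m)
      (fun s hs => (hf' s hs).sub (hquadm s))
      (fun s hs => (hf'' s hs).sub (hlin m s))
      (fun s hs => by have := hm s hs; show 0 ≤ f'' s - m; linarith)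
  have hhconv : ConvexOn ℝ (Set.Icc a b) (fun s => M / 2 * s ^ 2 - f s) :=
    aux_convexOn_of_second_deriv a b _ (fun s => M * s - f' s) (fun s => M - f'' s)
      (fun s hs => (hquadM s).sub (hf' s hs))
      (fun s hs => (hlin M s).sub (hf'' s hs))
      (fun s hs => by have := hM s hs; show 0 ≤ M - f'' s; linarith)
  set S1 := ∑ i, p i * f (x i) with hS1
  set Q := ∑ i, p i * (x i) ^ 2 with hQ
  set xb := ∑ i, p i * x i with hxb
  have h1 := aux_simic n a b hab _ hgconv p x hp hps hx
  have hsum1 : ∑ i, p i * (f (x i) - m / 2 * (x i) ^ 2) = S1 - m / 2 * Q := by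
    rw [hS1, hQ, Finset.mul_sum, ← Finset.sum_sub_distrib]
    apply Finset.sum_congr rfl; intro i _; ring
  rw [hsum1] at h1
  have h2 : M / 2 * xb ^ 2 - f xb ≤ ∑ i, p i * (M / 2 * (x i) ^ 2 - f (x i)) := by
    have := hhconv.map_sum_le (t := Finset.univ) (fun i _ => (hp i).le) hps (fun i _ => hx i)
    simpa [smul_eq_mul, hxb] using this
  have hsum2 : ∑ i, p i * (M / 2 * (x i) ^ 2 - f (x i)) = M / 2 * Q - S1 := by
    rw [hS1, hQ, Finset.mul_sum, ← Finset.sum_sub_distrib]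
    apply Finset.sum_congr rfl; intro i _; ring
  rw [hsum2] at h2
  have key : (m + M) * (S1 - f xb) ≤
      M * (f a + f b - 2 * f ((a + b) / 2)) + m * M * ((Q - xb ^ 2) - (b - a) ^ 2 / 4) := by
    nlinarith [mul_le_mul_of_nonneg_left h1 hMpos.le, mul_le_mul_of_nonneg_left h2 hmpos.le]
  rw [show (M / (m + M)) * (f a + f b - 2 * f ((a + b) / 2)) +
        (m * M / (m + M)) * ((Q - xb ^ 2) - (b - a) ^ 2 / 4)
      = (M * (f a + f b - 2 * f ((a + b) / 2)) + m * M * ((Q - xb ^ 2) - (b - a) ^ 2 / 4))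
        / (m + M) by field_simp]
  rw [le_div_iff₀ hmM]
  nlinarith [key]
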